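/- Let G be a pair of d-dimensional butterflies, i.e., the concatenation of two directed graphs each isomorphic to the d-dimensional standard butterfly. Then for every m ≤ d, G is a 2^m-concentrator: for every set A of 2^m input nodes (on layer 0) and every set B of 2^m output nodes (on layer 2d) there exist 2^m node-disjoint directed paths from A to B. -/

import Mathlib

/-- A binary string of length `d`. -/
abbrev BStr (d : ℕ) := Fin d → Bool

/-- Adjacency relation of a pair of `d`-dimensional butterflies: two standard
`d`-dimensional butterflies concatenated by identifying output node `b` of the
left butterfly with input node `τ b` of the right butterfly (every graph
obtained by concatenating two graphs isomorphic to the standard butterfly is of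
this form, up to isomorphism).  A node is a pair (layer, string) with layers
`0,…,2d`; nodes on layers `0,…,d-1` carry left-butterfly labels, and nodes on
layers `d,…,2d` carry right-butterfly labels. -/
def pairAdj (d : ℕ) (τ : BStr d ≃ BStr d)
    (u v : Fin (2*d+1) × BStr d) : Prop :=
  (u.1 : ℕ) + 1 = (v.1 : ℕ) ∧
  (((v.1 : ℕ) < d ∧ ∀ j : Fin d, (j : ℕ) ≠ (u.1 : ℕ) → u.2 j = v.2 j) ∨
   ((v.1 : ℕ) = d ∧ ∀ j : Fin d, (j : ℕ) ≠ (u.1 : ℕ) → u.2 j = τ.symm v.2 j) ∨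
   (d ≤ (u.1 : ℕ) ∧ ∀ j : Fin d, (j : ℕ) ≠ (u.1 : ℕ) - d → u.2 j = v.2 j))

/-- `P` is a system of node-disjoint directed paths of the layered graph with
adjacency `Adj`, one path starting at each input node (layer `0`) in `A`, such
that the endpoints (on layer `2d`) are exactly the members of `B`.  (Any
directed path from layer `0` to layer `2d` passes through each layer exactly
once, so it is faithfully recorded by the string it visits on each layer.) -/
def IsPathSystemOn (d : ℕ)
    (Adj : Fin (2*d+1) × BStr d → Fin (2*d+1) × BStr d → Prop)
    (A B : Finset (BStr d)) (P : BStr d → Fin (2*d+1) → BStr d) : Prop :=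
  (∀ a ∈ A, P a 0 = a) ∧
  (∀ a ∈ A, ∀ i : Fin (2*d), Adj (i.castSucc, P a i.castSucc) (i.succ, P a i.succ)) ∧
  (∀ a ∈ A, P a (Fin.last (2*d)) ∈ B) ∧
  (∀ b ∈ B, ∃ a ∈ A, P a (Fin.last (2*d)) = b) ∧
  (∀ a ∈ A, ∀ a' ∈ A, a ≠ a' → ∀ i, P a i ≠ P a' i)

namespace BflyAux

/-! ### Bit arithmetic helpers -/

def ofBits (g : ℕ → Bool) (n : ℕ) : ℕ := ∑ c ∈ Finset.range n, (g c).toNat * 2 ^ c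

lemma ofBits_lt (g : ℕ → Bool) (n : ℕ) : ofBits g n < 2 ^ n := by
  induction n with
  | zero => simp [ofBits]
  | succ n ih =>
    have : ofBits g (n+1) = ofBits g n + (g n).toNat * 2 ^ n := by
      simp [ofBits, Finset.sum_range_succ]
    rw [this, pow_succ]
    have : (g n).toNat ≤ 1 := Bool.toNat_le _
    nlinarith

lemma testBit_ofBits (g : ℕ → Bool) (n t : ℕ) :
    (ofBits g n).testBit t = (decide (t < n) && g t) := by
  induction n generalizing t with
  | zero => simp [ofBits]
  | succ n ih =>
    have heq : ofBits g (n+1) = ofBits g n + (g n).toNat * 2 ^ n := by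
      simp [ofBits, Finset.sum_range_succ]
    have hlt : ofBits g n < 2 ^ n := ofBits_lt g n
    rcases lt_trichotomy t n with h | h | h
    · have : (ofBits g (n+1)).testBit t = ((ofBits g (n+1)) % 2 ^ n).testBit t := by
        simp [Nat.testBit_mod_two_pow, h]
      rw [this]
      have hmod : ofBits g (n+1) % 2 ^ n = ofBits g n % 2 ^ n := by
        rw [heq, Nat.add_mul_mod_self_right]
      rw [hmod, Nat.testBit_mod_two_pow]
      simp [h, ih, Nat.lt_succ_of_lt h]
    · subst h
      rw [heq, Nat.testBit_eq_decide_div_mod_eq]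
      have hdiv : (ofBits g t + (g t).toNat * 2 ^ t) / 2 ^ t = (g t).toNat := by
        rw [Nat.add_mul_div_right _ _ (Nat.pow_pos (by norm_num)),
          Nat.div_eq_of_lt hlt, zero_add]
      rw [hdiv]
      cases g t <;> simp
    · have : ofBits g (n+1) < 2 ^ t := lt_of_lt_of_le (ofBits_lt g (n+1))
        (Nat.pow_le_pow_right (by norm_num) h)
      rw [Nat.testBit_lt_two_pow this]
      have hnt : ¬ t < n + 1 := by omega
      simp [hnt]

lemma mod_two_pow_eq_of_testBit {x y : ℕ} (i : ℕ)
    (h : ∀ t < i, x.testBit t = y.testBit t) : x % 2 ^ i = y % 2 ^ i := by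
  apply Nat.eq_of_testBit_eq
  intro t
  rw [Nat.testBit_mod_two_pow, Nat.testBit_mod_two_pow]
  by_cases ht : t < i
  · simp [ht, h t ht]
  · simp [ht]

lemma testBit_div_two_pow (x i t : ℕ) : (x / 2 ^ i).testBit t = x.testBit (i + t) := by
  rw [Nat.testBit_eq_decide_div_mod_eq, Nat.testBit_eq_decide_div_mod_eq, Nat.div_div_eq_div_mul, ← pow_add]

lemma div_two_pow_eq_of_testBit {x y : ℕ} (i : ℕ)
    (h : ∀ t, i ≤ t → x.testBit t = y.testBit t) : x / 2 ^ i = y / 2 ^ i := by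
  apply Nat.eq_of_testBit_eq
  intro t
  rw [testBit_div_two_pow, testBit_div_two_pow]
  exact h _ (by omega)

lemma sub_lt_of_div_two_pow_eq {x y i : ℕ} (h : x / 2 ^ i = y / 2 ^ i) :
    y - x < 2 ^ i := by
  have hx := Nat.div_add_mod x (2 ^ i)
  have hy := Nat.div_add_mod y (2 ^ i)
  rw [h] at hx
  have h1 : x % 2 ^ i < 2 ^ i := Nat.mod_lt _ (Nat.pow_pos (by norm_num))
  have h2 : y % 2 ^ i < 2 ^ i := Nat.mod_lt _ (Nat.pow_pos (by norm_num))
  omega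

/-! ### Values of bit strings -/

def valFwd {n : ℕ} (x : Fin n → Bool) : ℕ :=
  ofBits (fun c => if h : c < n then x ⟨c, h⟩ else false) n

def valRev {n : ℕ} (x : Fin n → Bool) : ℕ :=
  ofBits (fun c => if h : c < n then x ⟨n - 1 - c, by omega⟩ else false) n

lemma valFwd_lt {n : ℕ} (x : Fin n → Bool) : valFwd x < 2 ^ n := ofBits_lt _ _

lemma valRev_lt {n : ℕ} (x : Fin n → Bool) : valRev x < 2 ^ n := ofBits_lt _ _

lemma testBit_valFwd {n : ℕ} (x : Fin n → Bool) (t : ℕ) (ht : t < n) :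
    (valFwd x).testBit t = x ⟨t, ht⟩ := by
  rw [valFwd, testBit_ofBits]
  simp [ht]

lemma testBit_valRev {n : ℕ} (x : Fin n → Bool) (t : ℕ) (ht : t < n) :
    (valRev x).testBit t = x ⟨n - 1 - t, by omega⟩ := by
  rw [valRev, testBit_ofBits]
  simp [ht]

lemma valFwd_inj {n : ℕ} : Function.Injective (valFwd (n := n)) := by
  intro x y h
  funext j
  have := testBit_valFwd x j j.isLt
  rw [h, testBit_valFwd y j j.isLt] at this
  simpa [Fin.eta] using this.symm

lemma valRev_inj {n : ℕ} : Function.Injective (valRev (n := n)) := by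
  intro x y h
  funext j
  have hj : n - 1 - ((n : ℕ) - 1 - (j : ℕ)) = (j : ℕ) := by omega
  have h1 := testBit_valRev x (n - 1 - (j : ℕ)) (by omega)
  rw [h, testBit_valRev y (n - 1 - (j : ℕ)) (by omega)] at h1
  have : x ⟨n - 1 - (n - 1 - (j:ℕ)), by omega⟩ = y ⟨n - 1 - (n - 1 - (j:ℕ)), by omega⟩ := h1.symm
  simpa [hj] using this

lemma valFwd_div_eq {n : ℕ} {x y : Fin n → Bool} (i : ℕ)
    (h : ∀ j : Fin n, i ≤ (j : ℕ) → x j = y j) :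
    valFwd x / 2 ^ i = valFwd y / 2 ^ i := by
  apply div_two_pow_eq_of_testBit
  intro t ht
  by_cases htn : t < n
  · rw [testBit_valFwd x t htn, testBit_valFwd y t htn]
    exact h _ ht
  · rw [Nat.testBit_lt_two_pow, Nat.testBit_lt_two_pow]
    · exact lt_of_lt_of_le (valFwd_lt y) (Nat.pow_le_pow_right (by norm_num) (by omega))
    · exact lt_of_lt_of_le (valFwd_lt x) (Nat.pow_le_pow_right (by norm_num) (by omega))

lemma valRev_div_eq {n : ℕ} {x y : Fin n → Bool} (i : ℕ)
    (h : ∀ j : Fin n, (j : ℕ) < i → x j = y j) :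
    valRev x / 2 ^ (n - i) = valRev y / 2 ^ (n - i) := by
  apply div_two_pow_eq_of_testBit
  intro t ht
  by_cases htn : t < n
  · rw [testBit_valRev x t htn, testBit_valRev y t htn]
    have hlt : n - 1 - t < i := by omega
    exact h _ hlt
  · rw [Nat.testBit_lt_two_pow, Nat.testBit_lt_two_pow]
    · exact lt_of_lt_of_le (valRev_lt y) (Nat.pow_le_pow_right (by norm_num) (by omega))
    · exact lt_of_lt_of_le (valRev_lt x) (Nat.pow_le_pow_right (by norm_num) (by omega))

lemma valRev_mod_eq {n : ℕ} {x y : Fin n → Bool} (i : ℕ)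
    (h : ∀ j : Fin n, i ≤ (j : ℕ) → x j = y j) :
    valRev x % 2 ^ (n - i) = valRev y % 2 ^ (n - i) := by
  apply mod_two_pow_eq_of_testBit
  intro t ht
  have htn : t < n := by omega
  rw [testBit_valRev x t htn, testBit_valRev y t htn]
  have hle : i ≤ n - 1 - t := by omega
  exact h _ hle

/-! ### Ranks in a finite set -/

section rk
variable {α : Type*} [DecidableEq α] (v : α → ℕ) (s : Finset α)

noncomputable def rk (a : α) : ℕ := (s.filter (fun x => v x < v a)).card

lemma rk_lt {a : α} (ha : a ∈ s) : rk v s a < s.card := by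
  have hsub : s.filter (fun x => v x < v a) ⊆ s.erase a := by
    intro x hx
    rw [Finset.mem_filter] at hx
    exact Finset.mem_erase.mpr ⟨by rintro rfl; omega, hx.1⟩
  calc rk v s a ≤ (s.erase a).card := Finset.card_le_card hsub
    _ < s.card := Finset.card_erase_lt_of_mem ha

lemma rk_lt_rk {a a' : α} (ha : a ∈ s) (hlt : v a < v a') :
    rk v s a < rk v s a' := by
  apply Finset.card_lt_card
  rw [Finset.ssubset_def]
  constructor
  · intro x hx
    rw [Finset.mem_filter] at hx ⊢
    exact ⟨hx.1, by omega⟩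
  · intro hsub
    have := hsub (Finset.mem_filter.mpr ⟨ha, hlt⟩)
    rw [Finset.mem_filter] at this
    omega

lemma rk_injOn (hv : Set.InjOn v s) : Set.InjOn (rk v s) s := by
  intro a ha a' ha' h
  rcases lt_trichotomy (v a) (v a') with hl | he | hl
  · have := rk_lt_rk v s ha hl; omega
  · exact hv ha ha' he
  · have := rk_lt_rk v s ha' hl; omega

lemma rk_image (hv : Set.InjOn v s) :
    s.image (rk v s) = Finset.range s.card := by
  apply Finset.eq_of_subset_of_card_le
  · intro x hx
    rw [Finset.mem_image] at hx
    obtain ⟨a, ha, rfl⟩ := hx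
    exact Finset.mem_range.mpr (rk_lt v s ha)
  · rw [Finset.card_range, Finset.card_image_of_injOn (rk_injOn v s hv)]

lemma rk_surj (hv : Set.InjOn v s) {k : ℕ} (hk : k < s.card) :
    ∃ a ∈ s, rk v s a = k := by
  have : k ∈ s.image (rk v s) := by
    rw [rk_image v s hv]; exact Finset.mem_range.mpr hk
  rw [Finset.mem_image] at this
  exact this

lemma rk_sub_le (hv : Set.InjOn v s) {a a' : α} (hle : v a ≤ v a') :
    rk v s a' - rk v s a ≤ v a' - v a ∧ rk v s a ≤ rk v s a' := by
  have hmono : s.filter (fun x => v x < v a) ⊆ s.filter (fun x => v x < v a') := by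
    intro x hx
    rw [Finset.mem_filter] at hx ⊢
    exact ⟨hx.1, by omega⟩
  refine ⟨?_, Finset.card_le_card hmono⟩
  have hsplit : s.filter (fun x => v x < v a') ⊆
      s.filter (fun x => v x < v a) ∪ s.filter (fun x => v a ≤ v x ∧ v x < v a') := by
    intro x hx
    rw [Finset.mem_filter] at hx
    rw [Finset.mem_union, Finset.mem_filter, Finset.mem_filter]
    rcases lt_or_ge (v x) (v a) with h | h
    · exact Or.inl ⟨hx.1, h⟩
    · exact Or.inr ⟨hx.1, h, hx.2⟩
  have hcard := Finset.card_le_card hsplit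
  have hico : (s.filter (fun x => v a ≤ v x ∧ v x < v a')).card ≤ v a' - v a := by
    have : (s.filter (fun x => v a ≤ v x ∧ v x < v a')).card ≤
        (Finset.Ico (v a) (v a')).card := by
      apply Finset.card_le_card_of_injOn v
      · intro x hx
        rw [Finset.mem_coe, Finset.mem_filter] at hx
        exact Finset.mem_Ico.mpr ⟨hx.2.1, hx.2.2⟩
      · intro x hx y hy hxy
        rw [Finset.coe_filter] at hx hy
        exact hv hx.1 hy.1 hxy
    simpa [Nat.card_Ico] using this
  have := Finset.card_union_le (s.filter (fun x => v x < v a))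
    (s.filter (fun x => v a ≤ v x ∧ v x < v a'))
  rw [rk, rk]
  omega

/-- Key rank lemma: if the values of `a, a'` agree in high bits (above `i`) and
their ranks agree mod `2^i`, then `a = a'`. -/
lemma rk_eq_of (hv : Set.InjOn v s) {a a' : α} (ha : a ∈ s) (ha' : a' ∈ s) (i : ℕ)
    (hdiv : v a / 2 ^ i = v a' / 2 ^ i)
    (hmod : rk v s a % 2 ^ i = rk v s a' % 2 ^ i) : a = a' := by
  wlog hle : v a ≤ v a' generalizing a a'
  · exact (this ha' ha hdiv.symm hmod.symm (by omega)).symm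
  have hvd : v a' - v a < 2 ^ i := sub_lt_of_div_two_pow_eq hdiv
  obtain ⟨h1, h2⟩ := rk_sub_le v s hv (a := a) (a' := a') hle
  have hdvd : (2 ^ i : ℕ) ∣ rk v s a' - rk v s a :=
    (Nat.modEq_iff_dvd' h2).mp hmod
  have hlt : rk v s a' - rk v s a < 2 ^ i := by omega
  have hrkeq : rk v s a = rk v s a' := by
    rcases Nat.eq_zero_or_pos (rk v s a' - rk v s a) with h | h
    · omega
    · have := Nat.le_of_dvd h hdvd; omega
  exact rk_injOn v s hv ha ha' hrkeq

end rk


def embed {d : ℕ} (m : ℕ) (p : Fin m → Bool) (zz : Fin (d - m) → Bool) : BStr d :=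
  fun j => if h : (j : ℕ) < m then p ⟨j, h⟩ else zz ⟨(j : ℕ) - m, by omega⟩

def sfx {d : ℕ} (m : ℕ) (hm : m ≤ d) (x : BStr d) : Fin m → Bool :=
  fun u => x ⟨d - m + u, by omega⟩

lemma embed_prefix {d m : ℕ} (hm : m ≤ d) (p : Fin m → Bool) (zz : Fin (d - m) → Bool)
    (t : Fin m) : embed m p zz ⟨t, lt_of_lt_of_le t.isLt hm⟩ = p t := by
  rw [embed]
  simp [t.isLt]

lemma exists_middle (d m : ℕ) (hm : m ≤ d) (τ : BStr d ≃ BStr d) :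
    ∃ L : (Fin m → Bool) → BStr d,
      (∀ (p : Fin m → Bool) (t : Fin m), L p ⟨(t : ℕ), lt_of_lt_of_le t.isLt hm⟩ = p t) ∧
      Function.Injective (fun p => sfx m hm (τ (L p))) := by
  classical
  set Tfam : (Fin m → Bool) → Finset (Fin m → Bool) :=
    fun p => Finset.image (fun z => sfx m hm (τ (embed m p z))) Finset.univ with hTfam
  have hall : ∀ s : Finset (Fin m → Bool), s.card ≤ (s.biUnion Tfam).card := by
    intro s
    set X : Finset (BStr d) := s.biUnion (fun p => Finset.image (embed m p) Finset.univ) with hX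
    have hcardim : ∀ p : Fin m → Bool, (Finset.image (embed (d := d) m p) Finset.univ).card = 2 ^ (d - m) := by
      intro p
      rw [Finset.card_image_of_injective _ ?_]
      · simp
      · intro z z' hzz
        funext u
        have := congrFun hzz ⟨m + u, by omega⟩
        rw [embed, embed] at this
        simp only [dif_neg (by omega : ¬ (m + (u:ℕ) < m))] at this
        simpa [Nat.add_sub_cancel_left] using this
    have hXcard : X.card = s.card * 2 ^ (d - m) := by
      rw [hX, Finset.card_biUnion, Finset.sum_congr rfl (fun p _ => hcardim p)]
      · simp [Finset.sum_const, mul_comm]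
      · intro p _ p' _ hpp
        apply Finset.disjoint_left.mpr
        intro x hx hx'
        rw [Finset.mem_image] at hx hx'
        obtain ⟨z, _, rfl⟩ := hx
        obtain ⟨z', _, hzz⟩ := hx'
        apply hpp
        funext u
        have := congrFun hzz ⟨u, lt_of_lt_of_le u.isLt hm⟩
        rw [embed, embed] at this
        simpa [u.isLt] using this.symm
    have himg : s.biUnion Tfam = Finset.image (fun x => sfx m hm (τ x)) X := by
      ext y
      simp only [hTfam, hX, Finset.mem_biUnion, Finset.mem_image, Finset.mem_univ, true_and]
      constructor
      · rintro ⟨p, hp, z, rfl⟩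
        exact ⟨embed m p z, ⟨p, hp, z, rfl⟩, rfl⟩
      · rintro ⟨x, ⟨p, hp, z, rfl⟩, rfl⟩
        exact ⟨p, hp, z, rfl⟩
    have hfiber : X.card ≤ 2 ^ (d - m) * (Finset.image (fun x => sfx m hm (τ x)) X).card := by
      apply Finset.card_le_mul_card_image
      intro b _
      have : (X.filter (fun x => sfx m hm (τ x) = b)).card ≤
          (Finset.univ : Finset (Fin (d - m) → Bool)).card := by
        apply Finset.card_le_card_of_injOn (fun x (u : Fin (d - m)) => τ x ⟨(u : ℕ), by have := u.isLt; omega⟩)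
        · intro x _; exact Finset.mem_univ _
        · intro x hx x' hx' hxy
          rw [Finset.coe_filter] at hx hx'
          apply τ.injective
          funext j
          by_cases hj : (j : ℕ) < d - m
          · have := congrFun hxy ⟨(j : ℕ), hj⟩
            simpa [Fin.eta] using this
          · have := congrFun (hx.2.trans hx'.2.symm) ⟨(j : ℕ) - (d - m), by omega⟩
            rw [sfx, sfx] at this
            have hj' : d - m + ((j:ℕ) - (d - m)) = (j : ℕ) := by omega
            simpa [hj', Fin.eta] using this
      simpa using this
    have := himg ▸ hfiber
    rw [hXcard] at this
    have h2 : 0 < 2 ^ (d - m) := Nat.pow_pos (by norm_num)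
    rw [mul_comm] at this
    exact Nat.le_of_mul_le_mul_left this h2
  obtain ⟨f, hfinj, hf⟩ := (Finset.all_card_le_biUnion_card_iff_exists_injective Tfam).mp hall
  have hz : ∀ p, ∃ z : Fin (d - m) → Bool, sfx m hm (τ (embed m p z)) = f p := by
    intro p
    have := hf p
    rw [hTfam, Finset.mem_image] at this
    obtain ⟨z, _, hzz⟩ := this
    exact ⟨z, hzz⟩
  choose z hzspec using hz
  refine ⟨fun p => embed m p (z p), fun p t => embed_prefix hm p (z p) t, ?_⟩
  have : (fun p => sfx m hm (τ (embed m p (z p)))) = f := funext hzspec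
  rw [this]
  exact hfinj


end BflyAux
open BflyAux in
/-- any pair of `d`-dimensional butterflies is a `2^m`-concentrator
for every `m ≤ d`. -/
theorem pair_of_butterflies_pow_two_concentrator
    (d m : ℕ) (hm : m ≤ d) (τ : BStr d ≃ BStr d)
    (A B : Finset (BStr d)) (hA : A.card = 2 ^ m) (hB : B.card = 2 ^ m) :
    ∃ P : BStr d → Fin (2*d+1) → BStr d,
      IsPathSystemOn d (pairAdj d τ) A B P := by
  classical
  obtain ⟨Lmid, hLpre, hLinj⟩ := exists_middle d m hm τ
  have hvLinj : Set.InjOn (valFwd (n := d)) A := fun x _ y _ h => valFwd_inj h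
  have hvRinj : Set.InjOn (valRev (n := d)) B := fun x _ y _ h => valRev_inj h
  set pk : BStr d → (Fin m → Bool) := fun a t => (rk valFwd A a).testBit t with hpk
  set Lf : BStr d → BStr d := fun a => Lmid (pk a) with hLf
  set sf : BStr d → BStr d := fun a => τ (Lf a) with hsf
  set q : BStr d → (Fin m → Bool) := fun a => sfx m hm (sf a) with hq
  set g : BStr d → ℕ := fun a => valRev (q a) with hg
  -- basic facts
  have hrkA : ∀ a ∈ A, rk valFwd A a < 2 ^ m := fun a ha => hA ▸ rk_lt valFwd A ha
  have hrkB : ∀ b ∈ B, rk valRev B b < 2 ^ m := fun b hb => hB ▸ rk_lt valRev B hb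
  have hpkinj : ∀ a ∈ A, ∀ a' ∈ A, pk a = pk a' → a = a' := by
    intro a ha a' ha' h
    apply rk_injOn valFwd A hvLinj ha ha'
    apply Nat.eq_of_testBit_eq
    intro t
    by_cases htm : t < m
    · exact congrFun h ⟨t, htm⟩
    · rw [Nat.testBit_lt_two_pow, Nat.testBit_lt_two_pow]
      · exact lt_of_lt_of_le (hrkA a' ha') (Nat.pow_le_pow_right (by norm_num) (by omega))
      · exact lt_of_lt_of_le (hrkA a ha) (Nat.pow_le_pow_right (by norm_num) (by omega))
  have hqinj : ∀ a ∈ A, ∀ a' ∈ A, q a = q a' → a = a' := by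
    intro a ha a' ha' h
    exact hpkinj a ha a' ha' (hLinj h)
  have hginj : ∀ a ∈ A, ∀ a' ∈ A, g a = g a' → a = a' := by
    intro a ha a' ha' h
    exact hqinj a ha a' ha' (valRev_inj h)
  have hglt : ∀ a, g a < 2 ^ m := fun a => valRev_lt _
  -- choose targets in B
  have hBex : ∀ k : ℕ, ∃ b, k < 2 ^ m → (b ∈ B ∧ rk valRev B b = k) := by
    intro k
    by_cases hk : k < 2 ^ m
    · obtain ⟨b, hb1, hb2⟩ := rk_surj valRev B hvRinj (k := k) (by omega)
      exact ⟨b, fun _ => ⟨hb1, hb2⟩⟩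
    · exact ⟨fun _ => false, fun h => absurd h hk⟩
  choose bOf hbOf using hBex
  set bf : BStr d → BStr d := fun a => bOf (g a) with hbf
  have hbfB : ∀ a, bf a ∈ B := fun a => (hbOf (g a) (hglt a)).1
  have hbfrk : ∀ a, rk valRev B (bf a) = g a := fun a => (hbOf (g a) (hglt a)).2
  -- surjectivity of g onto range 2^m
  have hgim : A.image g = Finset.range (2 ^ m) := by
    apply Finset.eq_of_subset_of_card_le
    · intro x hx
      rw [Finset.mem_image] at hx
      obtain ⟨a, _, rfl⟩ := hx
      exact Finset.mem_range.mpr (hglt a)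
    · rw [Finset.card_range, Finset.card_image_of_injOn, hA]
      intro x hx y hy h
      exact hginj x hx y hy h
  -- the path system
  set P : BStr d → Fin (2*d+1) → BStr d := fun a i j =>
    if (i : ℕ) < d then (if (j : ℕ) < (i : ℕ) then Lf a j else a j)
    else (if (j : ℕ) < (i : ℕ) - d then bf a j else sf a j) with hP
  have hPlow : ∀ a (i : Fin (2*d+1)), (i : ℕ) < d →
      ∀ j : Fin d, P a i j = if (j : ℕ) < (i : ℕ) then Lf a j else a j := by
    intro a i hi j
    rw [hP]
    simp only [if_pos hi]
  have hPhigh : ∀ a (i : Fin (2*d+1)), ¬ (i : ℕ) < d →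
      ∀ j : Fin d, P a i j = if (j : ℕ) < (i : ℕ) - d then bf a j else sf a j := by
    intro a i hi j
    rw [hP]
    simp only [if_neg hi]
  have hPlast : ∀ a, P a (Fin.last (2*d)) = bf a := by
    intro a
    funext j
    rw [hPhigh a _ (by simp [Fin.val_last]; omega) j, if_pos]
    simp only [Fin.val_last]
    have := j.isLt
    omega
  refine ⟨P, ?_, ?_, ?_, ?_, ?_⟩
  · -- start
    intro a _
    funext j
    by_cases hd : 0 < d
    · rw [hPlow a 0 (by simpa using hd) j, if_neg (by simp)]
    · exact absurd (lt_of_lt_of_le j.isLt (by omega)) (lt_irrefl _)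
  · -- adjacency
    intro a _ i
    have hi2d : (i : ℕ) < 2 * d := i.isLt
    refine ⟨rfl, ?_⟩
    rcases lt_trichotomy ((i : ℕ) + 1) d with hlt | heq | hgt
    · refine Or.inl ⟨hlt, ?_⟩
      intro j hj
      show P a i.castSucc j = P a i.succ j
      replace hj : (j : ℕ) ≠ (i : ℕ) := hj
      rw [hPlow a _ (show (i : ℕ) < d by omega) j,
        hPlow a _ (show (i : ℕ) + 1 < d from hlt) j]
      show (if (j : ℕ) < (i : ℕ) then Lf a j else a j) =
        (if (j : ℕ) < (i : ℕ) + 1 then Lf a j else a j)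
      by_cases hji : (j : ℕ) < (i : ℕ)
      · rw [if_pos hji, if_pos (by omega)]
      · rw [if_neg hji, if_neg (by omega)]
    · refine Or.inr (Or.inl ⟨heq, ?_⟩)
      have hsucc : P a i.succ = sf a := by
        funext j
        rw [hPhigh a _ (show ¬ ((i : ℕ) + 1) < d by omega) j]
        show (if (j : ℕ) < (i : ℕ) + 1 - d then bf a j else sf a j) = sf a j
        rw [if_neg (by omega)]
      intro j hj
      show P a i.castSucc j = τ.symm ((i.succ, P a i.succ).2) j
      replace hj : (j : ℕ) ≠ (i : ℕ) := hj
      have : ((i.succ, P a i.succ).2) = sf a := hsucc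
      rw [this, hsf]
      simp only [Equiv.symm_apply_apply]
      rw [hPlow a _ (show (i : ℕ) < d by omega) j]
      show (if (j : ℕ) < (i : ℕ) then Lf a j else a j) = Lf a j
      rw [if_pos (by have := j.isLt; omega)]
    · refine Or.inr (Or.inr ⟨show d ≤ (i : ℕ) by omega, ?_⟩)
      intro j hj
      show P a i.castSucc j = P a i.succ j
      replace hj : (j : ℕ) ≠ (i : ℕ) - d := hj
      rw [hPhigh a _ (show ¬ (i : ℕ) < d by omega) j,
        hPhigh a _ (show ¬ ((i : ℕ) + 1) < d by omega) j]
      show (if (j : ℕ) < (i : ℕ) - d then bf a j else sf a j) =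
        (if (j : ℕ) < ((i : ℕ) + 1) - d then bf a j else sf a j)
      by_cases hji : (j : ℕ) < (i : ℕ) - d
      · rw [if_pos hji, if_pos (by omega)]
      · rw [if_neg hji, if_neg (by omega)]
  · -- endpoints in B
    intro a _
    rw [hPlast]
    exact hbfB a
  · -- endpoints cover B
    intro b hb
    have hk : rk valRev B b ∈ Finset.range (2 ^ m) := Finset.mem_range.mpr (hrkB b hb)
    rw [← hgim, Finset.mem_image] at hk
    obtain ⟨a, ha, hga⟩ := hk
    refine ⟨a, ha, ?_⟩
    rw [hPlast]
    apply rk_injOn valRev B hvRinj (hbfB a) hb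
    rw [hbfrk a, hga]
  · -- node-disjointness
    intro a ha a' ha' hne i hPeq
    apply hne
    have hfun : ∀ j : Fin d, P a i j = P a' i j := fun j => congrFun hPeq j
    by_cases hn : (i : ℕ) < d
    · -- left butterfly region
      have h1 : ∀ j : Fin d, (j : ℕ) < (i : ℕ) → Lf a j = Lf a' j := by
        intro j hj
        have := hfun j
        rw [hPlow a i hn j, hPlow a' i hn j, if_pos hj, if_pos hj] at this
        exact this
      have h2 : ∀ j : Fin d, (i : ℕ) ≤ (j : ℕ) → a j = a' j := by
        intro j hj
        have := hfun j
        rw [hPlow a i hn j, hPlow a' i hn j,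
          if_neg (by omega : ¬ (j : ℕ) < (i : ℕ)), if_neg (by omega : ¬ (j : ℕ) < (i : ℕ))] at this
        exact this
      have hmod : rk valFwd A a % 2 ^ (i : ℕ) = rk valFwd A a' % 2 ^ (i : ℕ) := by
        apply mod_two_pow_eq_of_testBit
        intro t ht
        by_cases htm : t < m
        · have e1 : (rk valFwd A a).testBit t = Lf a ⟨t, by omega⟩ := (hLpre (pk a) ⟨t, htm⟩).symm
          have e1' : (rk valFwd A a').testBit t = Lf a' ⟨t, by omega⟩ :=
            (hLpre (pk a') ⟨t, htm⟩).symm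
          rw [e1, e1']
          exact h1 ⟨t, by omega⟩ ht
        · rw [Nat.testBit_lt_two_pow, Nat.testBit_lt_two_pow]
          · exact lt_of_lt_of_le (hrkA a' ha') (Nat.pow_le_pow_right (by norm_num) (by omega))
          · exact lt_of_lt_of_le (hrkA a ha) (Nat.pow_le_pow_right (by norm_num) (by omega))
      have hdiv : valFwd a / 2 ^ (i : ℕ) = valFwd a' / 2 ^ (i : ℕ) := valFwd_div_eq (i : ℕ) h2
      exact rk_eq_of valFwd A hvLinj ha ha' (i : ℕ) hdiv hmod
    · -- right butterfly region
      have htd : (i : ℕ) - d ≤ d := by have := i.isLt; omega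
      have h1 : ∀ j : Fin d, (j : ℕ) < (i : ℕ) - d → bf a j = bf a' j := by
        intro j hj
        have := hfun j
        rw [hPhigh a i hn j, hPhigh a' i hn j, if_pos hj, if_pos hj] at this
        exact this
      have h2 : ∀ j : Fin d, (i : ℕ) - d ≤ (j : ℕ) → sf a j = sf a' j := by
        intro j hj
        have := hfun j
        rw [hPhigh a i hn j, hPhigh a' i hn j, if_neg (by omega : ¬ (j : ℕ) < (i : ℕ) - d),
          if_neg (by omega : ¬ (j : ℕ) < (i : ℕ) - d)] at this
        exact this
      by_cases htm : (i : ℕ) - d ≤ d - m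
      · have hqq : q a = q a' := by
          funext u
          apply h2
          show (i : ℕ) - d ≤ d - m + (u : ℕ)
          omega
        exact hqinj a ha a' ha' hqq
      · have hqm : ∀ u : Fin m, (i : ℕ) - d - (d - m) ≤ (u : ℕ) → q a u = q a' u := by
          intro u hu
          apply h2
          show (i : ℕ) - d ≤ d - m + (u : ℕ)
          omega
        have hgmod : g a % 2 ^ (d - ((i : ℕ) - d)) = g a' % 2 ^ (d - ((i : ℕ) - d)) := by
          have hvm := valRev_mod_eq (n := m) ((i : ℕ) - d - (d - m)) hqm
          have hexp : m - ((i : ℕ) - d - (d - m)) = d - ((i : ℕ) - d) := by omega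
          rw [hexp] at hvm
          exact hvm
        have hmod : rk valRev B (bf a) % 2 ^ (d - ((i : ℕ) - d)) =
            rk valRev B (bf a') % 2 ^ (d - ((i : ℕ) - d)) := by
          rw [hbfrk a, hbfrk a']
          exact hgmod
        have hdiv : valRev (bf a) / 2 ^ (d - ((i : ℕ) - d)) =
            valRev (bf a') / 2 ^ (d - ((i : ℕ) - d)) := valRev_div_eq ((i : ℕ) - d) h1
        have hbfeq : bf a = bf a' :=
          rk_eq_of valRev B hvRinj (hbfB a) (hbfB a') (d - ((i : ℕ) - d)) hdiv hmod
        have hgg : g a = g a' := by rw [← hbfrk a, ← hbfrk a', hbfeq]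
        exact hginj a ha a' ha' hgg
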